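/- Let p be a prime and f ∈ ℤ[x,y] a polynomial with integer coefficients and nonzero constant term. Let C_p = {(x,y) ∈ {0,1,…,p−1}² : p ∣ f(x,y)} and m = |C_p|, and assume that every (x,y) ∈ C_p satisfies p ∤ f_x(x,y). Then the cardinality of S = {(x,y) ∈ {0,1,…,p²−1}² : p ∣ f(x,y) and p² ∤ f(x,y)} equals m·p(p−1). -/

import Mathlib

open MvPolynomial

lemma taylor2 (p x y a b : ℤ) (f : MvPolynomial (Fin 2) ℤ) :
    (p^2 : ℤ) ∣ eval ![x + p*a, y + p*b] f -
      (eval ![x,y] f + p * (a * eval ![x,y] (pderiv 0 f) + b * eval ![x,y] (pderiv 1 f))) := by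
  induction f using MvPolynomial.induction_on with
  | C c => simp
  | add f g hf hg =>
      simp only [map_add]
      have := dvd_add hf hg
      convert this using 1
      rfl
      ring
  | mul_X f n hf =>
      obtain ⟨c, hc⟩ := hf
      have h1 : eval ![x + p*a, y + p*b] f = eval ![x,y] f + p * (a * eval ![x,y] (pderiv 0 f) + b * eval ![x,y] (pderiv 1 f)) + p^2 * c := by linarith [hc]
      fin_cases n
      · simp only [Fin.mk_zero, Fin.mk_one, map_mul, eval_X, Matrix.cons_val_zero,
          pderiv_mul, pderiv_X_self, pderiv_X_of_ne (by decide : (0:Fin 2) ≠ 1), map_add,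
          eval_mul, map_one, eval_zero, mul_one, mul_zero, add_zero, h1]
        exact ⟨a * (a * eval ![x,y] (pderiv 0 f) + b * eval ![x,y] (pderiv 1 f)) + c * x + p * (a * c), by ring⟩
      · simp only [Fin.mk_zero, Fin.mk_one, map_mul, eval_X, Matrix.cons_val_one, Matrix.head_cons, Matrix.cons_val_zero,
          pderiv_mul, pderiv_X_self, pderiv_X_of_ne (by decide : (1:Fin 2) ≠ 0), map_add,
          eval_mul, map_one, eval_zero, mul_one, mul_zero, add_zero, h1]
        exact ⟨b * (a * eval ![x,y] (pderiv 0 f) + b * eval ![x,y] (pderiv 1 f)) + c * y + p * (b * c), by ring⟩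

lemma red_mod_p (p x y a b : ℤ) (f : MvPolynomial (Fin 2) ℤ) :
    ((p:ℤ) ∣ eval ![x + p*a, y + p*b] f ↔ (p:ℤ) ∣ eval ![x,y] f) := by
  obtain ⟨c, hc⟩ := taylor2 p x y a b f
  have h1 : eval ![x + p*a, y + p*b] f = eval ![x,y] f + p * (a * eval ![x,y] (pderiv 0 f) + b * eval ![x,y] (pderiv 1 f)) + p^2 * c := by linarith
  rw [h1]
  constructor
  · intro h
    have := dvd_sub h (dvd_add (Dvd.intro _ rfl) ⟨p*c, by ring⟩ :
      (p:ℤ) ∣ p * (a * eval ![x,y] (pderiv 0 f) + b * eval ![x,y] (pderiv 1 f)) + p^2*c)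
    convert this using 1; rfl; ring
  · intro h
    exact dvd_add (dvd_add h (Dvd.intro _ rfl)) ⟨p*c, by ring⟩

lemma count_sol (p : ℕ) (hp : p.Prime) (k u v : ℤ) (hu : ¬ (p:ℤ) ∣ u) :
    ((Finset.range p ×ˢ Finset.range p).filter
      (fun ab : ℕ × ℕ => (p:ℤ) ∣ (k + ab.1*u + ab.2*v))).card = p := by
  haveI : Fact p.Prime := ⟨hp⟩
  have hu' : (u : ZMod p) ≠ 0 := by
    rwa [Ne, ZMod.intCast_zmod_eq_zero_iff_dvd]
  set g : ZMod p → ZMod p := fun w => (-(k + w*(v:ZMod p))) * (u:ZMod p)⁻¹ with hg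
  have key : ∀ (z w : ZMod p), (k:ZMod p) + z*u + w*v = 0 ↔ z = g w := by
    intro z w
    rw [hg]
    constructor
    · intro h
      field_simp
      linear_combination h
    · intro h
      rw [h]
      field_simp
      ring
  have hdvd : ∀ (a b : ℕ), ((p:ℤ) ∣ (k + a*u + b*v)) ↔ ((a : ZMod p) = g (b : ZMod p)) := by
    intro a b
    rw [← ZMod.intCast_zmod_eq_zero_iff_dvd]
    push_cast
    exact key a b
  have : ((Finset.range p ×ˢ Finset.range p).filter
      (fun ab : ℕ × ℕ => (p:ℤ) ∣ (k + ab.1*u + ab.2*v))).card = Fintype.card (ZMod p) := by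
    rw [← Finset.card_univ]
    apply Finset.card_bij' (i := fun (ab : ℕ × ℕ) _ => ((ab.2 : ZMod p)))
      (j := fun (w : ZMod p) _ => (((g w).val, w.val) : ℕ × ℕ))
    · intro ab hab
      exact Finset.mem_univ _
    · intro w _
      simp only [Finset.mem_filter, Finset.mem_product, Finset.mem_range]
      refine ⟨⟨ZMod.val_lt _, ZMod.val_lt _⟩, ?_⟩
      rw [hdvd]
      rw [ZMod.natCast_rightInverse _, ZMod.natCast_rightInverse _]
    · intro ab hab
      simp only [Finset.mem_filter, Finset.mem_product, Finset.mem_range] at hab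
      obtain ⟨⟨ha, hb⟩, hd⟩ := hab
      rw [hdvd] at hd
      have h2 : ((ab.2 : ZMod p)).val = ab.2 := ZMod.val_cast_of_lt hb
      have h1 : (g ((ab.2 : ZMod p))).val = ab.1 := by rw [← hd, ZMod.val_cast_of_lt ha]
      rw [h2] at *
      exact Prod.ext h1 h2
    · intro w _
      exact ZMod.natCast_rightInverse w
  rw [this, ZMod.card]

lemma count_not (p : ℕ) (hp : p.Prime) (k u v : ℤ) (hu : ¬ (p:ℤ) ∣ u) :
    ((Finset.range p ×ˢ Finset.range p).filter
      (fun ab : ℕ × ℕ => ¬ (p:ℤ) ∣ (k + ab.1*u + ab.2*v))).card = p * (p - 1) := by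
  classical
  rw [Finset.filter_not, Finset.card_sdiff_of_subset (Finset.filter_subset _ _),
    count_sol p hp k u v hu, Finset.card_product, Finset.card_range, Nat.mul_sub, Nat.mul_one]

theorem stmt_2 (p : ℕ) (hp : p.Prime) (f : MvPolynomial (Fin 2) ℤ)
    (hconst : MvPolynomial.coeff 0 f ≠ 0)
    (Cp : Finset (ℕ × ℕ))
    (hCp : Cp = (Finset.range p ×ˢ Finset.range p).filter (fun xy : ℕ × ℕ =>
      (p : ℤ) ∣ MvPolynomial.eval ![(xy.1 : ℤ), (xy.2 : ℤ)] f))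
    (m : ℕ) (hm : m = Cp.card)
    (hfx : ∀ xy ∈ Cp,
      ¬ (p : ℤ) ∣ MvPolynomial.eval ![(xy.1 : ℤ), (xy.2 : ℤ)] (MvPolynomial.pderiv 0 f)) :
    ((Finset.range (p ^ 2) ×ˢ Finset.range (p ^ 2)).filter (fun xy : ℕ × ℕ =>
        (p : ℤ) ∣ MvPolynomial.eval ![(xy.1 : ℤ), (xy.2 : ℤ)] f ∧
        ¬ ((p : ℤ) ^ 2 ∣ MvPolynomial.eval ![(xy.1 : ℤ), (xy.2 : ℤ)] f))).card
      = m * (p * (p - 1)) := by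
  classical
  have hp0 : 0 < p := hp.pos
  set Q : ℕ × ℕ → Prop := fun xy =>
      (p : ℤ) ∣ MvPolynomial.eval ![(xy.1 : ℤ), (xy.2 : ℤ)] f ∧
        ¬ ((p : ℤ) ^ 2 ∣ MvPolynomial.eval ![(xy.1 : ℤ), (xy.2 : ℤ)] f) with hQ
  set s := Finset.range p ×ˢ Finset.range p with hs
  -- step A : bijection with quadruples
  have stepA : ((Finset.range (p ^ 2) ×ˢ Finset.range (p ^ 2)).filter Q).card
      = ((s ×ˢ s).filter (fun q : (ℕ × ℕ) × (ℕ × ℕ) =>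
          Q (q.1.1 + p * q.2.1, q.1.2 + p * q.2.2))).card := by
    apply Finset.card_bij' (i := fun (xy : ℕ × ℕ) _ =>
        (((xy.1 % p, xy.2 % p), (xy.1 / p, xy.2 / p)) : (ℕ × ℕ) × (ℕ × ℕ)))
      (j := fun (q : (ℕ × ℕ) × (ℕ × ℕ)) _ => ((q.1.1 + p * q.2.1, q.1.2 + p * q.2.2) : ℕ × ℕ))
    · intro xy hxy
      simp only [Finset.mem_filter, Finset.mem_product, Finset.mem_range, hs, pow_two] at hxy ⊢
      obtain ⟨⟨hx, hy⟩, hq⟩ := hxy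
      refine ⟨⟨⟨Nat.mod_lt _ hp0, Nat.mod_lt _ hp0⟩,
        ⟨(Nat.div_lt_iff_lt_mul hp0).2 hx, (Nat.div_lt_iff_lt_mul hp0).2 hy⟩⟩, ?_⟩
      simpa only [Nat.mod_add_div] using hq
    · intro q hq
      simp only [Finset.mem_filter, Finset.mem_product, Finset.mem_range, hs, pow_two] at hq ⊢
      obtain ⟨⟨⟨h1, h2⟩, ⟨h3, h4⟩⟩, hQq⟩ := hq
      refine ⟨⟨?_, ?_⟩, hQq⟩
      · calc q.1.1 + p * q.2.1 < p + p * q.2.1 := by omega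
          _ ≤ p + p * (p-1) := by
              have : q.2.1 ≤ p - 1 := by omega
              exact Nat.add_le_add_left (Nat.mul_le_mul_left _ this) _
          _ ≤ p * p := by
              have hpp : p ≤ p * p := Nat.le_mul_of_pos_left p hp0
              rw [Nat.mul_sub, Nat.mul_one]
              omega
      · calc q.1.2 + p * q.2.2 < p + p * q.2.2 := by omega
          _ ≤ p + p * (p-1) := by
              have : q.2.2 ≤ p - 1 := by omega
              exact Nat.add_le_add_left (Nat.mul_le_mul_left _ this) _
          _ ≤ p * p := by
              have hpp : p ≤ p * p := Nat.le_mul_of_pos_left p hp0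
              rw [Nat.mul_sub, Nat.mul_one]
              omega
    · intro xy hxy
      simp only [Nat.mod_add_div]
    · intro q hq
      simp only [Finset.mem_filter, Finset.mem_product, Finset.mem_range, hs] at hq
      obtain ⟨⟨⟨h1, h2⟩, ⟨h3, h4⟩⟩, _⟩ := hq
      have e1 : (q.1.1 + p * q.2.1) % p = q.1.1 := by
        rw [Nat.add_mul_mod_self_left, Nat.mod_eq_of_lt h1]
      have e2 : (q.1.2 + p * q.2.2) % p = q.1.2 := by
        rw [Nat.add_mul_mod_self_left, Nat.mod_eq_of_lt h2]
      have e3 : (q.1.1 + p * q.2.1) / p = q.2.1 := by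
        rw [Nat.add_mul_div_left _ _ hp0, Nat.div_eq_of_lt h1, Nat.zero_add]
      have e4 : (q.1.2 + p * q.2.2) / p = q.2.2 := by
        rw [Nat.add_mul_div_left _ _ hp0, Nat.div_eq_of_lt h2, Nat.zero_add]
      simp only [e1, e2, e3, e4]
  rw [stepA]
  -- step B : card of filter on product as a double sum
  have stepB : ((s ×ˢ s).filter (fun q : (ℕ × ℕ) × (ℕ × ℕ) =>
      Q (q.1.1 + p * q.2.1, q.1.2 + p * q.2.2))).card
      = ∑ c ∈ s, (s.filter (fun ab : ℕ × ℕ => Q (c.1 + p * ab.1, c.2 + p * ab.2))).card := by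
    rw [Finset.card_filter, Finset.sum_product]
    refine Finset.sum_congr rfl fun c _ => ?_
    rw [Finset.card_filter]
  rw [stepB]
  -- step C : terms outside Cp vanish
  have hCpsub : Cp ⊆ s := by rw [hCp, hs]; exact Finset.filter_subset _ _
  have hzero : ∀ c ∈ s, c ∉ Cp →
      (s.filter (fun ab : ℕ × ℕ => Q (c.1 + p * ab.1, c.2 + p * ab.2))).card = 0 := by
    intro c hcs hc
    rw [Finset.card_eq_zero, Finset.filter_eq_empty_iff]
    intro ab _
    rw [hQ]
    simp only
    push_cast
    rw [red_mod_p]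
    intro h
    exact hc (by rw [hCp]; exact Finset.mem_filter.2 ⟨by rwa [hs] at hcs, h.1⟩)
  have hval : ∀ c ∈ Cp,
      (s.filter (fun ab : ℕ × ℕ => Q (c.1 + p * ab.1, c.2 + p * ab.2))).card = p * (p - 1) := by
    intro c hc
    have hu := hfx c hc
    have hd : (p : ℤ) ∣ MvPolynomial.eval ![(c.1 : ℤ), (c.2 : ℤ)] f := by
      rw [hCp, Finset.mem_filter] at hc
      exact hc.2
    obtain ⟨k, hk⟩ := hd
    set u := MvPolynomial.eval ![(c.1 : ℤ), (c.2 : ℤ)] (MvPolynomial.pderiv 0 f) with hu_def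
    set v := MvPolynomial.eval ![(c.1 : ℤ), (c.2 : ℤ)] (MvPolynomial.pderiv 1 f) with hv_def
    have hp0' : (p : ℤ) ≠ 0 := Int.natCast_ne_zero.2 hp0.ne'
    have hQiff : ∀ ab ∈ s, Q (c.1 + p * ab.1, c.2 + p * ab.2) ↔
        ¬ (p : ℤ) ∣ (k + ab.1 * u + ab.2 * v) := by
      intro ab _
      obtain ⟨t₀, ht⟩ := taylor2 p c.1 c.2 ab.1 ab.2 f
      have heval : MvPolynomial.eval ![(c.1 : ℤ) + p * ab.1, (c.2 : ℤ) + p * ab.2] f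
          = p * (k + (ab.1 * u + ab.2 * v) + p * t₀) := by
        rw [← hu_def, ← hv_def] at ht
        have : MvPolynomial.eval ![(c.1 : ℤ) + p * ab.1, (c.2 : ℤ) + p * ab.2] f
            = MvPolynomial.eval ![(c.1 : ℤ), (c.2 : ℤ)] f
              + p * (ab.1 * u + ab.2 * v) + p ^ 2 * t₀ := by linarith
        rw [this, hk]; ring
      rw [hQ]
      simp only
      push_cast
      rw [heval]
      have hdvd1 : (p : ℤ) ∣ p * (k + (ab.1 * u + ab.2 * v) + p * t₀) := Dvd.intro _ rfl
      have hdvd2 : ((p : ℤ) ^ 2 ∣ p * (k + (ab.1 * u + ab.2 * v) + p * t₀))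
          ↔ (p : ℤ) ∣ (k + ab.1 * u + ab.2 * v) := by
        rw [pow_two, mul_dvd_mul_iff_left hp0']
        constructor
        · intro h
          have := dvd_sub h (Dvd.intro _ rfl : (p : ℤ) ∣ p * t₀)
          convert this using 1; rfl; ring
        · intro h
          have := dvd_add h (Dvd.intro _ rfl : (p : ℤ) ∣ p * t₀)
          convert this using 1; ring
      rw [hdvd2]
      tauto
    rw [Finset.filter_congr hQiff, hs]
    exact count_not p hp k u v hu
  rw [← Finset.sum_subset hCpsub (fun c hcs hc => hzero c hcs hc)]
  rw [Finset.sum_congr rfl hval, Finset.sum_const, smul_eq_mul, hm]
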